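/- For all positive integers p, q, r, the real-extreme Khovanov homology of the pretzel link P(p, q, r) is KH^{i,j̲}(P(p, q, r)) ≅ ℤ at i = -n and j̲ = p+q+r-3n-3, and is trivial at all other homological gradings at quantum grading j̲, where n is the number of negative crossings in the standard link diagram of P(p, q, r). -/

import Mathlib

open scoped Classical

noncomputable section

/-! ## Combinatorial link diagrams

A link diagram is modelled as a 4-valent combinatorial map: `X` is the (finite, linearly
ordered) set of crossings, and each crossing has four ends ("darts") numbered
counterclockwise by `Fin 4`.  The two strands through a crossing occupy the end-pairs
`{0,2}` and `{1,3}`, and by convention the strand occupying the odd ends `{1,3}` is the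
over-strand.  `θ` is the fixed-point free involution pairing the two ends of each edge of
the diagram, and `inc d = true` records that the strand is oriented into the crossing at
the end `d` (orientations being consistent along edges and strands). -/

/-- A combinatorial model for an oriented link diagram. -/
structure Diagram where
  X : Type
  [fX : Fintype X]
  [oX : LinearOrder X]
  θ : X × Fin 4 → X × Fin 4
  invol : ∀ d, θ (θ d) = d
  nofix : ∀ d, θ d ≠ d
  inc : X × Fin 4 → Bool
  edge_ori : ∀ d, inc (θ d) = ! inc d
  strand_ori : ∀ x : X, inc (x, 2) = ! inc (x, 0) ∧ inc (x, 3) = ! inc (x, 1)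

attribute [instance] Diagram.fX Diagram.oX

/-- The darts (crossing-ends) of a diagram. -/
abbrev Diagram.Dart (D : Diagram) : Type := D.X × Fin 4

/-- The sign of a crossing, determined by the orientation: `true` = positive. -/
def Diagram.posCr (D : Diagram) (x : D.X) : Bool := D.inc (x, 0) != D.inc (x, 1)

/-- The number of negative crossings of the oriented diagram. -/
def Diagram.nNeg (D : Diagram) : ℕ :=
  (Finset.univ.filter fun x : D.X => D.posCr x = false).card

/-- The number of positive crossings of the oriented diagram. -/
def Diagram.nPos (D : Diagram) : ℕ :=
  (Finset.univ.filter fun x : D.X => D.posCr x = true).card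

/-- The writhe of the oriented diagram. -/
def Diagram.writhe (D : Diagram) : ℤ := (D.nPos : ℤ) - (D.nNeg : ℤ)

/-- `smoothStep D s d`: in the smoothing of the diagram determined by the Kauffman state
`s` (`false` = A-label, `true` = B-label), the dart at the same crossing to which the dart
`d` is connected by a smoothing arc.  The A-smoothing joins the ends `0,1` and the ends
`2,3`; the B-smoothing joins the ends `1,2` and the ends `3,0`. -/
def smoothStep (D : Diagram) (s : D.X → Bool) (d : D.Dart) : D.Dart :=
  (d.1, if s d.1 then 3 - d.2 else if (d.2 : ℕ) % 2 = 0 then d.2 + 1 else d.2 - 1)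

/-- Generating relation for the circles of the smoothed diagram `D_s`: two darts are
related if they are joined by an edge of the diagram or by a smoothing arc. -/
def circGen (D : Diagram) (s : D.X → Bool) : D.Dart → D.Dart → Prop :=
  fun a b => b = D.θ a ∨ b = smoothStep D s a

/-- The circles of the smoothed diagram `D_s`. -/
def Circles (D : Diagram) (s : D.X → Bool) : Type := Quot (circGen D s)

instance (D : Diagram) (s : D.X → Bool) : Finite (Circles D s) := Quot.finite _

/-- The number of circles of the smoothed diagram `D_s`. -/
def nCircles (D : Diagram) (s : D.X → Bool) : ℕ := Nat.card (Circles D s)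

/-- Counterclockwise rotation of the darts at each crossing. -/
def rotStep (D : Diagram) (d : D.Dart) : D.Dart := (d.1, d.2 + 1)

/-- The number of faces of the combinatorial map underlying the diagram. -/
def nFaces (D : Diagram) : ℕ := Nat.card (Quot fun a b : D.Dart => b = rotStep D (D.θ a))

/-- The number of connected components of the underlying 4-valent graph. -/
def nComps (D : Diagram) : ℕ :=
  Nat.card (Quot fun a b : D.Dart => b = D.θ a ∨ b = rotStep D a)

/-- A combinatorial map is a genuine (planar) link diagram iff it has genus 0, i.e. the
Euler formula `V - E + F = 2 C` holds; since `E = 2 V` this reads `F = V + 2 C`. -/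
def Diagram.IsPlanar (D : Diagram) : Prop := nFaces D = Fintype.card D.X + 2 * nComps D

/-! ### Standard pretzel diagrams

The ends of a crossing placed in a vertical twist region point to the bottom-left,
bottom-right, top-right and top-left; which of the four `Fin 4` labels sits in which
position depends on the sign `h` of the twist region (`true` = a positive half-twist
region, `false` = a negative one), since the over-strand always occupies the odd labels. -/

/-- Bottom-left end of a crossing in a twist region of sign `h`. -/
def blSlot (h : Bool) : Fin 4 := if h then 3 else 0
/-- Bottom-right end of a crossing in a twist region of sign `h`. -/
def brSlot (h : Bool) : Fin 4 := if h then 0 else 1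
/-- Top-right end of a crossing in a twist region of sign `h`. -/
def trSlot (h : Bool) : Fin 4 := if h then 1 else 2
/-- Top-left end of a crossing in a twist region of sign `h`. -/
def tlSlot (h : Bool) : Fin 4 := if h then 2 else 3

/-- `TwistRegion D m h v`: the crossings `v 0, …, v (m-1)` are stacked from bottom to top
into a vertical twist region of `m` half-twists of sign `h`. -/
def TwistRegion (D : Diagram) (m : ℕ) (h : Bool) (v : Fin m → D.X) : Prop :=
  ∀ (j : ℕ) (h1 : j < m) (h2 : j + 1 < m),
    D.θ (v ⟨j, h1⟩, tlSlot h) = (v ⟨j + 1, h2⟩, blSlot h) ∧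
    D.θ (v ⟨j, h1⟩, trSlot h) = (v ⟨j + 1, h2⟩, brSlot h)

/-- `IsStdPretzel h₁ h₂ h₃ p q r hp hq hr D` says that the diagram `D` is (a copy of) the
standard diagram of the pretzel link with three twist regions of `p`, `q` and `r`
half-twists, of signs `h₁`, `h₂`, `h₃` (`true` = positive), equipped with some orientation:
the three twist regions stand side by side and are closed up by three arcs at the top
(left top-right end to middle top-left end, middle top-right end to right top-left end,
and left top-left end to right top-right end around the back) and likewise by three arcs
at the bottom. -/
def IsStdPretzel (h₁ h₂ h₃ : Bool) (p q r : ℕ) (hp : 0 < p) (hq : 0 < q) (hr : 0 < r)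
    (D : Diagram) : Prop :=
  ∃ φ : (Fin p ⊕ (Fin q ⊕ Fin r)) ≃ D.X,
    TwistRegion D p h₁ (fun j => φ (Sum.inl j)) ∧
    TwistRegion D q h₂ (fun j => φ (Sum.inr (Sum.inl j))) ∧
    TwistRegion D r h₃ (fun j => φ (Sum.inr (Sum.inr j))) ∧
    D.θ (φ (Sum.inl ⟨p - 1, by omega⟩), trSlot h₁)
      = (φ (Sum.inr (Sum.inl ⟨q - 1, by omega⟩)), tlSlot h₂) ∧
    D.θ (φ (Sum.inr (Sum.inl ⟨q - 1, by omega⟩)), trSlot h₂)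
      = (φ (Sum.inr (Sum.inr ⟨r - 1, by omega⟩)), tlSlot h₃) ∧
    D.θ (φ (Sum.inl ⟨p - 1, by omega⟩), tlSlot h₁)
      = (φ (Sum.inr (Sum.inr ⟨r - 1, by omega⟩)), trSlot h₃) ∧
    D.θ (φ (Sum.inl ⟨0, hp⟩), brSlot h₁)
      = (φ (Sum.inr (Sum.inl ⟨0, hq⟩)), blSlot h₂) ∧
    D.θ (φ (Sum.inr (Sum.inl ⟨0, hq⟩)), brSlot h₂)
      = (φ (Sum.inr (Sum.inr ⟨0, hr⟩)), blSlot h₃) ∧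
    D.θ (φ (Sum.inl ⟨0, hp⟩), blSlot h₁)
      = (φ (Sum.inr (Sum.inr ⟨0, hr⟩)), brSlot h₃)

/-! ## Khovanov homology of an oriented link diagram (following Viro) -/

/-- An enhanced Kauffman state of the diagram `D`: a Kauffman state `st` (assigning the
label `A` — encoded as `false` — or `B` — encoded as `true` — to each crossing) together
with a sign (`true` = `+`, `false` = `-`) attached to each circle of the smoothed diagram
`D_st`, encoded as a function on darts which is constant on each circle. -/
structure EState (D : Diagram) where
  st : D.X → Bool
  sgn : D.Dart → Bool
  const : ∀ a b, circGen D st a b → sgn a = sgn b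

instance (D : Diagram) : Finite (EState D) := by
  have hinj : Function.Injective (fun S : EState D => (S.st, S.sgn)) := by
    intro a b h
    cases a
    cases b
    simp only [Prod.mk.injEq] at h
    obtain ⟨h1, h2⟩ := h
    subst h1
    subst h2
    rfl
  exact Finite.of_injective _ hinj

noncomputable instance (D : Diagram) : Fintype (EState D) := Fintype.ofFinite _

/-- The sign attached by an enhanced state to each circle of the smoothed diagram. -/
def EState.sgnQ {D : Diagram} (S : EState D) : Circles D S.st → Bool :=
  Quot.lift S.sgn S.const

/-- `τ(S)`: the number of circles with sign `+` minus the number of circles with sign `-`. -/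
def EState.tau {D : Diagram} (S : EState D) : ℤ :=
  (Nat.card {c : Circles D S.st // S.sgnQ c = true} : ℤ) -
    (Nat.card {c : Circles D S.st // S.sgnQ c = false} : ℤ)

/-- The number of `B`-labels of the underlying Kauffman state. -/
def EState.nB {D : Diagram} (S : EState D) : ℕ :=
  (Finset.univ.filter fun x : D.X => S.st x = true).card

/-- The homological grading `i(S) = (ω - σ)/2` (which equals `#B - n`). -/
def EState.iDeg {D : Diagram} (S : EState D) : ℤ := (S.nB : ℤ) - (D.nNeg : ℤ)

/-- The quantum grading `j(S) = ω + i(S) + τ(S)`. -/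
def EState.jDeg {D : Diagram} (S : EState D) : ℤ := D.writhe + S.iDeg + S.tau

/-- The circle of the smoothed diagram `D_s` through the dart `d` touches the crossing `x`. -/
def touchesCrossing (D : Diagram) (s : D.X → Bool) (d : D.Dart) (x : D.X) : Prop :=
  ∃ i : Fin 4, Relation.EqvGen (circGen D s) d (x, i)

/-- The enhanced state `T` is adjacent to the enhanced state `S`: they assign identical
labels to all crossings except one, where `S` assigns an `A`-label and `T` a `B`-label,
they have the same quantum grading, and they assign the same signs to the common circles
(the circles not touching the changed crossing). -/
def EState.Adjacent {D : Diagram} (S T : EState D) : Prop :=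
  ∃ x : D.X,
    S.st x = false ∧ T.st x = true ∧ (∀ y, y ≠ x → T.st y = S.st y) ∧
    T.jDeg = S.jDeg ∧
    ∀ d : D.Dart, ¬ touchesCrossing D S.st d x → T.sgn d = S.sgn d

/-- The number of `B`-labelled crossings coming after the changed crossing
(in the fixed linear order on the crossings). -/
def kAfter {D : Diagram} (S T : EState D) : ℕ :=
  (Finset.univ.filter fun y : D.X =>
    T.st y = true ∧ ∃ x : D.X, S.st x ≠ T.st x ∧ x < y).card

/-- The incidence number `(S : T)`: `(-1)^k` if `T` is adjacent to `S`, and `0` otherwise. -/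
def incNum {D : Diagram} (S T : EState D) : ℤ :=
  if S.Adjacent T then (-1) ^ kAfter S T else 0

/-- The Khovanov chain group: the free abelian group on the enhanced states of `D`. -/
abbrev KChain (D : Diagram) : Type := EState D →₀ ℤ

/-- The Khovanov differential `∂ S = Σ_T (S : T) T`. -/
noncomputable def khDiff (D : Diagram) : KChain D →ₗ[ℤ] KChain D :=
  Finsupp.linearCombination ℤ fun S => ∑ T : EState D, Finsupp.single T (incNum S T)

/-- The subgroup of chains of bidegree `(i, j)` (spanned by the enhanced states `S` with
`i(S) = i` and `j(S) = j`). -/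
def khGrade (D : Diagram) (i j : ℤ) : Submodule ℤ (KChain D) :=
  Finsupp.supported ℤ ℤ {S : EState D | S.iDeg = i ∧ S.jDeg = j}

/-- The cycles of bidegree `(i, j)`: `Ker ∂ᵢ`. -/
def khCycles (D : Diagram) (i j : ℤ) : Submodule ℤ (KChain D) :=
  LinearMap.ker (khDiff D) ⊓ khGrade D i j

/-- The boundaries of bidegree `(i, j)`: `Im ∂_{i-1}`. -/
def khBoundaries (D : Diagram) (i j : ℤ) : Submodule ℤ (KChain D) :=
  Submodule.map (khDiff D) (khGrade D (i - 1) j)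

/-- The Khovanov homology `KH^{i,j}(D) = Ker ∂ᵢ / Im ∂_{i-1}` of the diagram `D`
(a link invariant). -/
def KH (D : Diagram) (i j : ℤ) : Type :=
  ↥(khCycles D i j) ⧸ Submodule.comap (khCycles D i j).subtype (khBoundaries D i j)

noncomputable instance (D : Diagram) (i j : ℤ) : AddCommGroup (KH D i j) :=
  inferInstanceAs (AddCommGroup
    (↥(khCycles D i j) ⧸ Submodule.comap (khCycles D i j).subtype (khBoundaries D i j)))

noncomputable instance (D : Diagram) (i j : ℤ) : Module ℤ (KH D i j) :=
  inferInstanceAs (Module ℤ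
    (↥(khCycles D i j) ⧸ Submodule.comap (khCycles D i j).subtype (khBoundaries D i j)))

/-- `j` is the real-extreme quantum grading of the link represented by `D`: it is the
smallest quantum grading at which the Khovanov homology is non-trivial for some
homological grading. -/
def IsRealExtremeGrading (D : Diagram) (j : ℤ) : Prop :=
  (∃ i : ℤ, Nontrivial (KH D i j)) ∧
  ∀ j' : ℤ, j' < j → ∀ i : ℤ, ¬ Nontrivial (KH D i j')

namespace PretzelAux

variable {D : Diagram} {s : D.X → Bool}

/-- Class of a dart in the smoothed diagram. -/
abbrev Qm (D : Diagram) (s : D.X → Bool) (d : D.Dart) : Circles D s := Quot.mk _ d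

lemma Q_theta (d : D.Dart) : Qm D s d = Qm D s (D.θ d) := Quot.sound (Or.inl rfl)

lemma Q_smooth (d : D.Dart) : Qm D s d = Qm D s (smoothStep D s d) := Quot.sound (Or.inr rfl)

lemma smooth_A2 {x : D.X} (h : s x = false) : smoothStep D s (x, 2) = (x, 3) := by
  simp [smoothStep, h]

lemma smooth_A1 {x : D.X} (h : s x = false) : smoothStep D s (x, 1) = (x, 0) := by
  simp [smoothStep, h]

lemma smooth_B2 {x : D.X} (h : s x = true) : smoothStep D s (x, 2) = (x, 1) := by
  simp [smoothStep, h]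

lemma smooth_B1 {x : D.X} (h : s x = true) : smoothStep D s (x, 1) = (x, 2) := by
  simp [smoothStep, h]

lemma smooth_B3 {x : D.X} (h : s x = true) : smoothStep D s (x, 3) = (x, 0) := by
  simp [smoothStep, h]


lemma smooth_A0 {x : D.X} (h : s x = false) : smoothStep D s (x, 0) = (x, 1) := by
  simp [smoothStep, h]

lemma smooth_A3 {x : D.X} (h : s x = false) : smoothStep D s (x, 3) = (x, 2) := by
  simp only [smoothStep, h]
  exact congrArg _ (by decide)

lemma theta_inv (D : Diagram) {a b : D.Dart} (h : D.θ a = b) : D.θ b = a := by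
  rw [← h, D.invol]

@[simp] lemma tlSlot_true : tlSlot true = 2 := rfl
@[simp] lemma trSlot_true : trSlot true = 1 := rfl
@[simp] lemma blSlot_true : blSlot true = 3 := rfl
@[simp] lemma brSlot_true : brSlot true = 0 := rfl

@[simp] lemma finmk0 (h : (0:ℕ) < 4) : (⟨0, h⟩ : Fin 4) = 0 := rfl
@[simp] lemma finmk1 (h : (1:ℕ) < 4) : (⟨1, h⟩ : Fin 4) = 1 := rfl
@[simp] lemma finmk2 (h : (2:ℕ) < 4) : (⟨2, h⟩ : Fin 4) = 2 := rfl
@[simp] lemma finmk3 (h : (3:ℕ) < 4) : (⟨3, h⟩ : Fin 4) = 3 := rfl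

@[simp] lemma finval0 : ((0 : Fin 4) : ℕ) = 0 := rfl
@[simp] lemma finval1 : ((1 : Fin 4) : ℕ) = 1 := rfl
@[simp] lemma finval2 : ((2 : Fin 4) : ℕ) = 2 := rfl
@[simp] lemma finval3 : ((3 : Fin 4) : ℕ) = 3 := rfl

end PretzelAux
namespace PretzelAux2
open PretzelAux

variable {D : Diagram} {s : D.X → Bool}


lemma QA2 {x : D.X} (h : s x = false) : Qm D s (x, 2) = Qm D s (x, 3) :=
  (Q_smooth _).trans (by rw [smooth_A2 h])

lemma QA1 {x : D.X} (h : s x = false) : Qm D s (x, 1) = Qm D s (x, 0) :=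
  (Q_smooth _).trans (by rw [smooth_A1 h])

lemma QB1 {x : D.X} (h : s x = true) : Qm D s (x, 1) = Qm D s (x, 2) :=
  (Q_smooth _).trans (by rw [smooth_B1 h])

lemma QB3 {x : D.X} (h : s x = true) : Qm D s (x, 3) = Qm D s (x, 0) :=
  (Q_smooth _).trans (by rw [smooth_B3 h])

/-- Every dart in a twist region is connected to a bottom dart or to the `tl`-dart of a
`B`-labelled crossing. -/
lemma region_walk {m : ℕ} {v : Fin m → D.X} (hv : TwistRegion D m true v) (h0 : 0 < m) :
    ∀ (n : ℕ) (hn : n < m) (i : Fin 4),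
      Qm D s (v ⟨n, hn⟩, i) = Qm D s (v ⟨0, h0⟩, 3) ∨
      Qm D s (v ⟨n, hn⟩, i) = Qm D s (v ⟨0, h0⟩, 0) ∨
      ∃ x, s x = true ∧ Qm D s (v ⟨n, hn⟩, i) = Qm D s (x, 2) := by
  intro n
  induction n with
  | zero =>
    intro hn i
    have h3 : Qm D s (v ⟨0, hn⟩, 3) = Qm D s (v ⟨0, h0⟩, 3) := rfl
    have h0' : Qm D s (v ⟨0, hn⟩, 0) = Qm D s (v ⟨0, h0⟩, 0) := rfl
    have h2 : Qm D s (v ⟨0, hn⟩, 2) = Qm D s (v ⟨0, h0⟩, 3) ∨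
        ∃ x, s x = true ∧ Qm D s (v ⟨0, hn⟩, 2) = Qm D s (x, 2) := by
      cases hsx : s (v ⟨0, hn⟩) with
      | false => exact Or.inl ((QA2 hsx).trans h3)
      | true => exact Or.inr ⟨_, hsx, rfl⟩
    fin_cases i
    · exact Or.inr (Or.inl h0')
    · cases hsx : s (v ⟨0, hn⟩) with
      | false => exact Or.inr (Or.inl ((QA1 hsx).trans h0'))
      | true => exact Or.inr (Or.inr ⟨_, hsx, QB1 hsx⟩)
    · rcases h2 with h | h
      · exact Or.inl h
      · exact Or.inr (Or.inr h)
    · exact Or.inl h3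
  | succ k ih =>
    intro hn i
    have hk : k < m := by omega
    have e3 : Qm D s (v ⟨k + 1, hn⟩, 3) = Qm D s (v ⟨k, hk⟩, 2) := by
      have := (hv k hk hn).1
      simp only [tlSlot_true, blSlot_true] at this
      rw [← this]
      exact (Q_theta _).symm
    have e0 : Qm D s (v ⟨k + 1, hn⟩, 0) = Qm D s (v ⟨k, hk⟩, 1) := by
      have := (hv k hk hn).2
      simp only [trSlot_true, brSlot_true] at this
      rw [← this]
      exact (Q_theta _).symm
    have h3 : Qm D s (v ⟨k + 1, hn⟩, 3) = Qm D s (v ⟨0, h0⟩, 3) ∨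
        Qm D s (v ⟨k + 1, hn⟩, 3) = Qm D s (v ⟨0, h0⟩, 0) ∨
        ∃ x, s x = true ∧ Qm D s (v ⟨k + 1, hn⟩, 3) = Qm D s (x, 2) := by
      rcases ih hk 2 with h | h | ⟨x, hx, h⟩
      · exact Or.inl (e3.trans h)
      · exact Or.inr (Or.inl (e3.trans h))
      · exact Or.inr (Or.inr ⟨x, hx, e3.trans h⟩)
    have h0' : Qm D s (v ⟨k + 1, hn⟩, 0) = Qm D s (v ⟨0, h0⟩, 3) ∨
        Qm D s (v ⟨k + 1, hn⟩, 0) = Qm D s (v ⟨0, h0⟩, 0) ∨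
        ∃ x, s x = true ∧ Qm D s (v ⟨k + 1, hn⟩, 0) = Qm D s (x, 2) := by
      rcases ih hk 1 with h | h | ⟨x, hx, h⟩
      · exact Or.inl (e0.trans h)
      · exact Or.inr (Or.inl (e0.trans h))
      · exact Or.inr (Or.inr ⟨x, hx, e0.trans h⟩)
    fin_cases i
    · exact h0'
    · cases hsx : s (v ⟨k + 1, hn⟩) with
      | false =>
        have e : Qm D s (v ⟨k + 1, hn⟩, 1) = Qm D s (v ⟨k + 1, hn⟩, 0) :=
          QA1 hsx
        rcases h0' with h | h | ⟨x, hx, h⟩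
        · exact Or.inl (e.trans h)
        · exact Or.inr (Or.inl (e.trans h))
        · exact Or.inr (Or.inr ⟨x, hx, e.trans h⟩)
      | true => exact Or.inr (Or.inr ⟨_, hsx, QB1 hsx⟩)
    · cases hsx : s (v ⟨k + 1, hn⟩) with
      | false =>
        have e : Qm D s (v ⟨k + 1, hn⟩, 2) = Qm D s (v ⟨k + 1, hn⟩, 3) :=
          QA2 hsx
        rcases h3 with h | h | ⟨x, hx, h⟩
        · exact Or.inl (e.trans h)
        · exact Or.inr (Or.inl (e.trans h))
        · exact Or.inr (Or.inr ⟨x, hx, e.trans h⟩)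
      | true => exact Or.inr (Or.inr ⟨_, hsx, rfl⟩)
    · exact h3

/-- Below the lowest `B`-crossing the two sides of a twist region connect straight down. -/
lemma region_bottom {m : ℕ} {v : Fin m → D.X} (hv : TwistRegion D m true v) (h0 : 0 < m) :
    ∀ (n : ℕ) (hn : n < m), (∀ (k : ℕ) (hk : k < n), s (v ⟨k, by omega⟩) = false) →
      Qm D s (v ⟨n, hn⟩, 3) = Qm D s (v ⟨0, h0⟩, 3) ∧
      Qm D s (v ⟨n, hn⟩, 0) = Qm D s (v ⟨0, h0⟩, 0) := by
  intro n
  induction n with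
  | zero => exact fun hn _ => ⟨rfl, rfl⟩
  | succ k ih =>
    intro hn hA
    have hk : k < m := by omega
    have hAk : s (v ⟨k, hk⟩) = false := hA k (by omega)
    have e3 : Qm D s (v ⟨k + 1, hn⟩, 3) = Qm D s (v ⟨k, hk⟩, 2) := by
      have := (hv k hk hn).1
      simp only [tlSlot_true, blSlot_true] at this
      rw [← this]; exact (Q_theta _).symm
    have e0 : Qm D s (v ⟨k + 1, hn⟩, 0) = Qm D s (v ⟨k, hk⟩, 1) := by
      have := (hv k hk hn).2
      simp only [trSlot_true, brSlot_true] at this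
      rw [← this]; exact (Q_theta _).symm
    obtain ⟨ih3, ih0⟩ := ih hk (fun k' hk' => hA k' (by omega))
    constructor
    · exact (e3.trans (QA2 hAk)).trans ih3
    · exact (e0.trans (QA1 hAk)).trans ih0

/-- If a twist region contains a `B`-crossing, then its two bottom darts are connected. -/
lemma region_merge {m : ℕ} {v : Fin m → D.X} (hv : TwistRegion D m true v) (h0 : 0 < m)
    (hx : ∃ j : Fin m, s (v j) = true) :
    Qm D s (v ⟨0, h0⟩, 3) = Qm D s (v ⟨0, h0⟩, 0) := by
  obtain ⟨⟨j, hj⟩, hsj⟩ := hx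
  induction j using Nat.strong_induction_on with
  | _ j ih =>
    by_cases hbelow : ∃ (k : ℕ) (hk : k < j), s (v ⟨k, by omega⟩) = true
    · obtain ⟨k, hk, hsk⟩ := hbelow
      exact ih k hk (by omega) hsk
    · push_neg at hbelow
      have hA : ∀ (k : ℕ) (hk : k < j), s (v ⟨k, by omega⟩) = false := by
        intro k hk
        have := hbelow k hk
        simpa using this
      obtain ⟨e3, e0⟩ := region_bottom hv h0 j hj hA
      exact e3.symm.trans ((QB3 hsj).trans e0)

end PretzelAux2
namespace PretzelAux3
open PretzelAux PretzelAux2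

variable {D : Diagram} {s : D.X → Bool}

/-- Number of `B`-labels of a Kauffman state. -/
def nBst (D : Diagram) (s : D.X → Bool) : ℕ :=
  (Finset.univ.filter fun x : D.X => s x = true).card

lemma nCircles_le_of_cover_two (u w : D.Dart)
    (h : ∀ d : D.Dart, (∃ x, s x = true ∧ Qm D s d = Qm D s (x, 2)) ∨
      Qm D s d = Qm D s u ∨ Qm D s d = Qm D s w) :
    nCircles D s ≤ nBst D s + 2 := by
  classical
  set f : ({x : D.X // s x = true} ⊕ Fin 2) → Circles D s := fun y =>
    Sum.elim (fun x => Qm D s (x.1, 2)) (fun i => if i = 0 then Qm D s u else Qm D s w) y with hf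
  have hsurj : Function.Surjective f := by
    intro c
    induction c using Quot.ind with
    | _ d =>
      rcases h d with ⟨x, hx, hd⟩ | hd | hd
      · exact ⟨Sum.inl ⟨x, hx⟩, hd.symm⟩
      · exact ⟨Sum.inr 0, by simpa [hf] using hd.symm⟩
      · exact ⟨Sum.inr 1, by simpa [hf] using hd.symm⟩
  have := Nat.card_le_card_of_surjective f hsurj
  simpa only [Nat.card_sum, Nat.card_eq_fintype_card, Fintype.card_sum, Fintype.card_subtype, Fintype.card_fin,
    nBst, nCircles] using this

lemma nCircles_le_of_cover_three (u w z : D.Dart)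
    (h : ∀ d : D.Dart, (∃ x, s x = true ∧ Qm D s d = Qm D s (x, 2)) ∨
      Qm D s d = Qm D s u ∨ Qm D s d = Qm D s w ∨ Qm D s d = Qm D s z) :
    nCircles D s ≤ nBst D s + 3 := by
  classical
  set f : ({x : D.X // s x = true} ⊕ Fin 3) → Circles D s := fun y =>
    Sum.elim (fun x => Qm D s (x.1, 2))
      (fun i => if i = 0 then Qm D s u else if i = 1 then Qm D s w else Qm D s z) y with hf
  have hsurj : Function.Surjective f := by
    intro c
    induction c using Quot.ind with
    | _ d =>
      rcases h d with ⟨x, hx, hd⟩ | hd | hd | hd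
      · exact ⟨Sum.inl ⟨x, hx⟩, hd.symm⟩
      · exact ⟨Sum.inr 0, by simpa [hf] using hd.symm⟩
      · exact ⟨Sum.inr 1, by simpa [hf] using hd.symm⟩
      · exact ⟨Sum.inr 2, by simpa [hf] using hd.symm⟩
  have := Nat.card_le_card_of_surjective f hsurj
  simpa only [Nat.card_sum, Nat.card_eq_fintype_card, Fintype.card_sum, Fintype.card_subtype, Fintype.card_fin,
    nBst, nCircles] using this

/-- The signs split the circles into two classes. -/
lemma tau_card_split (S : EState D) :
    Nat.card {c : Circles D S.st // S.sgnQ c = true} +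
      Nat.card {c : Circles D S.st // S.sgnQ c = false} = nCircles D S.st := by
  classical
  letI : Fintype (Circles D S.st) := Fintype.ofFinite _
  rw [nCircles, Nat.card_eq_fintype_card, Nat.card_eq_fintype_card, Nat.card_eq_fintype_card,
    Fintype.card_subtype, Fintype.card_subtype]
  have := Finset.card_filter_add_card_filter_not
    (s := (Finset.univ : Finset (Circles D S.st))) (p := fun c => S.sgnQ c = true)
  simpa [Bool.not_eq_true] using this

lemma tau_ge (S : EState D) : -(nCircles D S.st : ℤ) ≤ S.tau := by
  have h := tau_card_split S
  unfold EState.tau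
  omega

lemma nB_eq (S : EState D) : S.nB = nBst D S.st := rfl

end PretzelAux3
namespace PretzelAux4
open PretzelAux PretzelAux2 PretzelAux3

lemma KH_subsingleton_of_empty (D : Diagram) (i j : ℤ)
    (h : {S : EState D | S.iDeg = i ∧ S.jDeg = j} = ∅) : Subsingleton (KH D i j) := by
  have hg : khGrade D i j = ⊥ := by rw [khGrade, h, Finsupp.supported_empty]
  have hc : khCycles D i j = ⊥ := by rw [khCycles, hg, inf_bot_eq]
  haveI : Subsingleton ↥(khCycles D i j) := by rw [hc]; infer_instance
  show Subsingleton
    (↥(khCycles D i j) ⧸ Submodule.comap (khCycles D i j).subtype (khBoundaries D i j))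
  exact (Submodule.Quotient.mk_surjective _).subsingleton

lemma KH_equiv_int (D : Diagram) (i0 j0 : ℤ) (S0 : EState D)
    (hset : {S : EState D | S.iDeg = i0 ∧ S.jDeg = j0} = {S0})
    (hset' : {S : EState D | S.iDeg = i0 - 1 ∧ S.jDeg = j0} = ∅)
    (hdiff : ∀ T, incNum S0 T = 0) :
    Nonempty (KH D i0 j0 ≃+ ℤ) := by
  classical
  have grade_eq : khGrade D i0 j0 = Finsupp.supported ℤ ℤ {S0} := by rw [khGrade, hset]
  have hle : khGrade D i0 j0 ≤ LinearMap.ker (khDiff D) := by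
    rw [grade_eq]
    intro g hg
    rw [Finsupp.mem_supported, ← Finset.coe_singleton, Finset.coe_subset] at hg
    have hgeq : g = Finsupp.single S0 (g S0) := Finsupp.support_subset_singleton.mp hg
    rw [LinearMap.mem_ker, hgeq, khDiff, Finsupp.linearCombination_single]
    simp [hdiff]
  have cycles_eq : khCycles D i0 j0 = Finsupp.supported ℤ ℤ {S0} := by
    rw [khCycles, inf_eq_right.mpr hle, grade_eq]
  have hbdry : khBoundaries D i0 j0 = ⊥ := by
    rw [khBoundaries, khGrade, hset', Finsupp.supported_empty, Submodule.map_bot]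
  have hbot : Submodule.comap (khCycles D i0 j0).subtype (khBoundaries D i0 j0) = ⊥ := by
    rw [hbdry, Submodule.comap_bot, Submodule.ker_subtype]
  have e1 := Submodule.quotEquivOfEqBot _ hbot
  have e2 := LinearEquiv.ofEq _ _ cycles_eq
  have e3 := Finsupp.supportedEquivFinsupp (R := ℤ) (M := ℤ) ({S0} : Set (EState D))
  have e4 := Finsupp.LinearEquiv.finsuppUnique ℤ ℤ ↥({S0} : Set (EState D))
  exact ⟨(((e1.trans e2).trans e3).trans e4).toAddEquiv⟩

lemma nontrivial_of_equiv_int {G : Type*} [AddCommGroup G] (e : G ≃+ ℤ) : Nontrivial G :=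
  e.toEquiv.nontrivial

end PretzelAux4
namespace PretzelAux5
open PretzelAux PretzelAux2 PretzelAux3

variable {D : Diagram} {p q r : ℕ} {hp : 0 < p} {hq : 0 < q} {hr : 0 < r}
variable {φ : (Fin p ⊕ (Fin q ⊕ Fin r)) ≃ D.X}

lemma cover_all {s : D.X → Bool}
    (hT1 : TwistRegion D p true (fun j => φ (Sum.inl j)))
    (hT2 : TwistRegion D q true (fun j => φ (Sum.inr (Sum.inl j))))
    (hT3 : TwistRegion D r true (fun j => φ (Sum.inr (Sum.inr j))))
    (hBot12 : D.θ (φ (Sum.inl ⟨0, hp⟩), 0) = (φ (Sum.inr (Sum.inl ⟨0, hq⟩)), 3))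
    (hBot23 : D.θ (φ (Sum.inr (Sum.inl ⟨0, hq⟩)), 0) = (φ (Sum.inr (Sum.inr ⟨0, hr⟩)), 3))
    (hBot13 : D.θ (φ (Sum.inl ⟨0, hp⟩), 3) = (φ (Sum.inr (Sum.inr ⟨0, hr⟩)), 0))
    (d : D.Dart) :
    (∃ x, s x = true ∧ Qm D s d = Qm D s (x, 2)) ∨
      Qm D s d = Qm D s (φ (Sum.inl ⟨0, hp⟩), 3) ∨
      Qm D s d = Qm D s (φ (Sum.inl ⟨0, hp⟩), 0) ∨
      Qm D s d = Qm D s (φ (Sum.inr (Sum.inl ⟨0, hq⟩)), 0) := by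
  have b12 : Qm D s (φ (Sum.inl ⟨0, hp⟩), 0) = Qm D s (φ (Sum.inr (Sum.inl ⟨0, hq⟩)), 3) := by
    rw [← hBot12]; exact Q_theta _
  have b23 : Qm D s (φ (Sum.inr (Sum.inl ⟨0, hq⟩)), 0)
      = Qm D s (φ (Sum.inr (Sum.inr ⟨0, hr⟩)), 3) := by
    rw [← hBot23]; exact Q_theta _
  have b13 : Qm D s (φ (Sum.inl ⟨0, hp⟩), 3) = Qm D s (φ (Sum.inr (Sum.inr ⟨0, hr⟩)), 0) := by
    rw [← hBot13]; exact Q_theta _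
  obtain ⟨x, i⟩ := d
  have hx : x = φ (φ.symm x) := (φ.apply_symm_apply x).symm
  rcases he : φ.symm x with j | j | j
  · rw [he] at hx; subst hx
    obtain ⟨jv, hj⟩ := j
    rcases region_walk hT1 hp jv hj i with h | h | ⟨x', hx', h⟩
    · exact Or.inr (Or.inl h)
    · exact Or.inr (Or.inr (Or.inl h))
    · exact Or.inl ⟨x', hx', h⟩
  · rw [he] at hx; subst hx
    obtain ⟨jv, hj⟩ := j
    rcases region_walk hT2 hq jv hj i with h | h | ⟨x', hx', h⟩
    · exact Or.inr (Or.inr (Or.inl (h.trans b12.symm)))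
    · exact Or.inr (Or.inr (Or.inr h))
    · exact Or.inl ⟨x', hx', h⟩
  · rw [he] at hx; subst hx
    obtain ⟨jv, hj⟩ := j
    rcases region_walk hT3 hr jv hj i with h | h | ⟨x', hx', h⟩
    · exact Or.inr (Or.inr (Or.inr (h.trans b23.symm)))
    · exact Or.inr (Or.inl (h.trans b13.symm))
    · exact Or.inl ⟨x', hx', h⟩

lemma ncirc_le_three (s : D.X → Bool)
    (hT1 : TwistRegion D p true (fun j => φ (Sum.inl j)))
    (hT2 : TwistRegion D q true (fun j => φ (Sum.inr (Sum.inl j))))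
    (hT3 : TwistRegion D r true (fun j => φ (Sum.inr (Sum.inr j))))
    (hBot12 : D.θ (φ (Sum.inl ⟨0, hp⟩), 0) = (φ (Sum.inr (Sum.inl ⟨0, hq⟩)), 3))
    (hBot23 : D.θ (φ (Sum.inr (Sum.inl ⟨0, hq⟩)), 0) = (φ (Sum.inr (Sum.inr ⟨0, hr⟩)), 3))
    (hBot13 : D.θ (φ (Sum.inl ⟨0, hp⟩), 3) = (φ (Sum.inr (Sum.inr ⟨0, hr⟩)), 0)) :
    nCircles D s ≤ nBst D s + 3 :=
  nCircles_le_of_cover_three _ _ _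
    (fun d => cover_all hT1 hT2 hT3 hBot12 hBot23 hBot13 d)

lemma ncirc_le_two (s : D.X → Bool) (hs : ∃ x, s x = true)
    (hT1 : TwistRegion D p true (fun j => φ (Sum.inl j)))
    (hT2 : TwistRegion D q true (fun j => φ (Sum.inr (Sum.inl j))))
    (hT3 : TwistRegion D r true (fun j => φ (Sum.inr (Sum.inr j))))
    (hBot12 : D.θ (φ (Sum.inl ⟨0, hp⟩), 0) = (φ (Sum.inr (Sum.inl ⟨0, hq⟩)), 3))
    (hBot23 : D.θ (φ (Sum.inr (Sum.inl ⟨0, hq⟩)), 0) = (φ (Sum.inr (Sum.inr ⟨0, hr⟩)), 3))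
    (hBot13 : D.θ (φ (Sum.inl ⟨0, hp⟩), 3) = (φ (Sum.inr (Sum.inr ⟨0, hr⟩)), 0)) :
    nCircles D s ≤ nBst D s + 2 := by
  have cover := fun d => cover_all (s := s) hT1 hT2 hT3 hBot12 hBot23 hBot13 d
  have b12 : Qm D s (φ (Sum.inl ⟨0, hp⟩), 0) = Qm D s (φ (Sum.inr (Sum.inl ⟨0, hq⟩)), 3) := by
    rw [← hBot12]; exact Q_theta _
  have b23 : Qm D s (φ (Sum.inr (Sum.inl ⟨0, hq⟩)), 0)
      = Qm D s (φ (Sum.inr (Sum.inr ⟨0, hr⟩)), 3) := by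
    rw [← hBot23]; exact Q_theta _
  have b13 : Qm D s (φ (Sum.inl ⟨0, hp⟩), 3) = Qm D s (φ (Sum.inr (Sum.inr ⟨0, hr⟩)), 0) := by
    rw [← hBot13]; exact Q_theta _
  obtain ⟨x, hx⟩ := hs
  have hx' : s (φ (φ.symm x)) = true := by rwa [φ.apply_symm_apply]
  rcases he : φ.symm x with j | j | j <;> rw [he] at hx'
  · -- region 1 contains a B: classes of (x1,3) and (x1,0) merge
    have hm : Qm D s (φ (Sum.inl ⟨0, hp⟩), 3) = Qm D s (φ (Sum.inl ⟨0, hp⟩), 0) :=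
      region_merge hT1 hp ⟨j, hx'⟩
    apply nCircles_le_of_cover_two (φ (Sum.inl ⟨0, hp⟩), 0) (φ (Sum.inr (Sum.inl ⟨0, hq⟩)), 0)
    intro d
    rcases cover d with h | h | h | h
    · exact Or.inl h
    · exact Or.inr (Or.inl (h.trans hm))
    · exact Or.inr (Or.inl h)
    · exact Or.inr (Or.inr h)
  · have hm : Qm D s (φ (Sum.inr (Sum.inl ⟨0, hq⟩)), 3)
        = Qm D s (φ (Sum.inr (Sum.inl ⟨0, hq⟩)), 0) :=
      region_merge hT2 hq ⟨j, hx'⟩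
    apply nCircles_le_of_cover_two (φ (Sum.inl ⟨0, hp⟩), 3) (φ (Sum.inr (Sum.inl ⟨0, hq⟩)), 0)
    intro d
    rcases cover d with h | h | h | h
    · exact Or.inl h
    · exact Or.inr (Or.inl h)
    · exact Or.inr (Or.inr (h.trans (b12.trans hm)))
    · exact Or.inr (Or.inr h)
  · have hm : Qm D s (φ (Sum.inr (Sum.inr ⟨0, hr⟩)), 3)
        = Qm D s (φ (Sum.inr (Sum.inr ⟨0, hr⟩)), 0) :=
      region_merge hT3 hr ⟨j, hx'⟩
    apply nCircles_le_of_cover_two (φ (Sum.inl ⟨0, hp⟩), 3) (φ (Sum.inl ⟨0, hp⟩), 0)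
    intro d
    rcases cover d with h | h | h | h
    · exact Or.inl h
    · exact Or.inr (Or.inl h)
    · exact Or.inr (Or.inr h)
    · exact Or.inr (Or.inl (h.trans ((b23.trans hm).trans b13.symm)))

end PretzelAux5
namespace PretzelAux6
open PretzelAux PretzelAux2 PretzelAux3

variable {D : Diagram} {p q r : ℕ}

/-- 3-coloring of the darts of the all-`A` smoothing of the standard pretzel diagram. -/
def col (φ : (Fin p ⊕ (Fin q ⊕ Fin r)) ≃ D.X) (d : D.Dart) : Fin 3 :=
  Sum.elim (fun _ => if (d.2 : ℕ) ≤ 1 then 1 else 0)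
    (Sum.elim (fun _ => if (d.2 : ℕ) ≤ 1 then 2 else 1)
      (fun _ => if (d.2 : ℕ) ≤ 1 then 0 else 2)) (φ.symm d.1)

variable {hp : 0 < p} {hq : 0 < q} {hr : 0 < r} {φ : (Fin p ⊕ (Fin q ⊕ Fin r)) ≃ D.X}

lemma col_theta
    (hT1 : TwistRegion D p true (fun j => φ (Sum.inl j)))
    (hT2 : TwistRegion D q true (fun j => φ (Sum.inr (Sum.inl j))))
    (hT3 : TwistRegion D r true (fun j => φ (Sum.inr (Sum.inr j))))
    (hTop12 : D.θ (φ (Sum.inl ⟨p - 1, by omega⟩), 1) = (φ (Sum.inr (Sum.inl ⟨q - 1, by omega⟩)), 2))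
    (hTop23 : D.θ (φ (Sum.inr (Sum.inl ⟨q - 1, by omega⟩)), 1)
      = (φ (Sum.inr (Sum.inr ⟨r - 1, by omega⟩)), 2))
    (hTop13 : D.θ (φ (Sum.inl ⟨p - 1, by omega⟩), 2) = (φ (Sum.inr (Sum.inr ⟨r - 1, by omega⟩)), 1))
    (hBot12 : D.θ (φ (Sum.inl ⟨0, hp⟩), 0) = (φ (Sum.inr (Sum.inl ⟨0, hq⟩)), 3))
    (hBot23 : D.θ (φ (Sum.inr (Sum.inl ⟨0, hq⟩)), 0) = (φ (Sum.inr (Sum.inr ⟨0, hr⟩)), 3))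
    (hBot13 : D.θ (φ (Sum.inl ⟨0, hp⟩), 3) = (φ (Sum.inr (Sum.inr ⟨0, hr⟩)), 0)) :
    ∀ (e : Fin p ⊕ (Fin q ⊕ Fin r)) (i : Fin 4), col φ (D.θ (φ e, i)) = col φ (φ e, i) := by
  rintro (⟨jv, hj⟩ | ⟨jv, hj⟩ | ⟨jv, hj⟩) i <;> fin_cases i <;> simp only [finmk0, finmk1, finmk2, finmk3]
  -- region 1, slot 0
  · rcases Nat.eq_zero_or_eq_succ_pred jv with h0 | h0
    · subst h0; rw [hBot12]; simp [col, finval0, finval1, finval2, finval3]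
    · obtain ⟨k, rfl⟩ : ∃ k, jv = k + 1 := ⟨jv - 1, h0⟩
      have hk : k < p := by omega
      have h2 := (hT1 k hk hj).2
      simp only [trSlot_true, brSlot_true] at h2
      rw [theta_inv D h2]; simp [col, finval0, finval1, finval2, finval3]
  -- region 1, slot 1
  · by_cases htop : jv + 1 < p
    · have h2 := (hT1 jv hj htop).2
      simp only [trSlot_true, brSlot_true] at h2
      rw [h2]; simp [col, finval0, finval1, finval2, finval3]
    · have : jv = p - 1 := by omega
      subst this
      rw [hTop12]; simp [col, finval0, finval1, finval2, finval3]
  -- region 1, slot 2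
  · by_cases htop : jv + 1 < p
    · have h2 := (hT1 jv hj htop).1
      simp only [tlSlot_true, blSlot_true] at h2
      rw [h2]; simp [col, finval0, finval1, finval2, finval3]
    · have : jv = p - 1 := by omega
      subst this
      rw [hTop13]; simp [col, finval0, finval1, finval2, finval3]
  -- region 1, slot 3
  · rcases Nat.eq_zero_or_eq_succ_pred jv with h0 | h0
    · subst h0; rw [hBot13]; simp [col, finval0, finval1, finval2, finval3]
    · obtain ⟨k, rfl⟩ : ∃ k, jv = k + 1 := ⟨jv - 1, h0⟩
      have hk : k < p := by omega
      have h2 := (hT1 k hk hj).1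
      simp only [tlSlot_true, blSlot_true] at h2
      rw [theta_inv D h2]; simp [col, finval0, finval1, finval2, finval3]
  -- region 2, slot 0
  · rcases Nat.eq_zero_or_eq_succ_pred jv with h0 | h0
    · subst h0; rw [hBot23]; simp [col, finval0, finval1, finval2, finval3]
    · obtain ⟨k, rfl⟩ : ∃ k, jv = k + 1 := ⟨jv - 1, h0⟩
      have hk : k < q := by omega
      have h2 := (hT2 k hk hj).2
      simp only [trSlot_true, brSlot_true] at h2
      rw [theta_inv D h2]; simp [col, finval0, finval1, finval2, finval3]
  -- region 2, slot 1
  · by_cases htop : jv + 1 < q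
    · have h2 := (hT2 jv hj htop).2
      simp only [trSlot_true, brSlot_true] at h2
      rw [h2]; simp [col, finval0, finval1, finval2, finval3]
    · have : jv = q - 1 := by omega
      subst this
      rw [hTop23]; simp [col, finval0, finval1, finval2, finval3]
  -- region 2, slot 2
  · by_cases htop : jv + 1 < q
    · have h2 := (hT2 jv hj htop).1
      simp only [tlSlot_true, blSlot_true] at h2
      rw [h2]; simp [col, finval0, finval1, finval2, finval3]
    · have : jv = q - 1 := by omega
      subst this
      rw [theta_inv D hTop12]; simp [col, finval0, finval1, finval2, finval3]
  -- region 2, slot 3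
  · rcases Nat.eq_zero_or_eq_succ_pred jv with h0 | h0
    · subst h0; rw [theta_inv D hBot12]; simp [col, finval0, finval1, finval2, finval3]
    · obtain ⟨k, rfl⟩ : ∃ k, jv = k + 1 := ⟨jv - 1, h0⟩
      have hk : k < q := by omega
      have h2 := (hT2 k hk hj).1
      simp only [tlSlot_true, blSlot_true] at h2
      rw [theta_inv D h2]; simp [col, finval0, finval1, finval2, finval3]
  -- region 3, slot 0
  · rcases Nat.eq_zero_or_eq_succ_pred jv with h0 | h0
    · subst h0; rw [theta_inv D hBot13]; simp [col, finval0, finval1, finval2, finval3]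
    · obtain ⟨k, rfl⟩ : ∃ k, jv = k + 1 := ⟨jv - 1, h0⟩
      have hk : k < r := by omega
      have h2 := (hT3 k hk hj).2
      simp only [trSlot_true, brSlot_true] at h2
      rw [theta_inv D h2]; simp [col, finval0, finval1, finval2, finval3]
  -- region 3, slot 1
  · by_cases htop : jv + 1 < r
    · have h2 := (hT3 jv hj htop).2
      simp only [trSlot_true, brSlot_true] at h2
      rw [h2]; simp [col, finval0, finval1, finval2, finval3]
    · have : jv = r - 1 := by omega
      subst this
      rw [theta_inv D hTop13]; simp [col, finval0, finval1, finval2, finval3]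
  -- region 3, slot 2
  · by_cases htop : jv + 1 < r
    · have h2 := (hT3 jv hj htop).1
      simp only [tlSlot_true, blSlot_true] at h2
      rw [h2]; simp [col, finval0, finval1, finval2, finval3]
    · have : jv = r - 1 := by omega
      subst this
      rw [theta_inv D hTop23]; simp [col, finval0, finval1, finval2, finval3]
  -- region 3, slot 3
  · rcases Nat.eq_zero_or_eq_succ_pred jv with h0 | h0
    · subst h0; rw [theta_inv D hBot23]; simp [col, finval0, finval1, finval2, finval3]
    · obtain ⟨k, rfl⟩ : ∃ k, jv = k + 1 := ⟨jv - 1, h0⟩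
      have hk : k < r := by omega
      have h2 := (hT3 k hk hj).1
      simp only [tlSlot_true, blSlot_true] at h2
      rw [theta_inv D h2]; simp [col, finval0, finval1, finval2, finval3]

lemma col_smooth : ∀ d : D.Dart, col φ (smoothStep D (fun _ => false) d) = col φ d := by
  intro d
  obtain ⟨x, i⟩ := d
  have h : (fun _ : D.X => false) x = false := rfl
  rcases hb : φ.symm x with j | j | j <;> fin_cases i <;>
      simp only [finmk0, finmk1, finmk2, finmk3]
  · rw [smooth_A0 h]; simp [col, hb, finval0, finval1, finval2, finval3]
  · rw [smooth_A1 h]; simp [col, hb, finval0, finval1, finval2, finval3]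
  · rw [smooth_A2 h]; simp [col, hb, finval0, finval1, finval2, finval3]
  · rw [smooth_A3 h]; simp [col, hb, finval0, finval1, finval2, finval3]
  · rw [smooth_A0 h]; simp [col, hb, finval0, finval1, finval2, finval3]
  · rw [smooth_A1 h]; simp [col, hb, finval0, finval1, finval2, finval3]
  · rw [smooth_A2 h]; simp [col, hb, finval0, finval1, finval2, finval3]
  · rw [smooth_A3 h]; simp [col, hb, finval0, finval1, finval2, finval3]
  · rw [smooth_A0 h]; simp [col, hb, finval0, finval1, finval2, finval3]
  · rw [smooth_A1 h]; simp [col, hb, finval0, finval1, finval2, finval3]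
  · rw [smooth_A2 h]; simp [col, hb, finval0, finval1, finval2, finval3]
  · rw [smooth_A3 h]; simp [col, hb, finval0, finval1, finval2, finval3]

open PretzelAux5 in
lemma ncirc0
    (hT1 : TwistRegion D p true (fun j => φ (Sum.inl j)))
    (hT2 : TwistRegion D q true (fun j => φ (Sum.inr (Sum.inl j))))
    (hT3 : TwistRegion D r true (fun j => φ (Sum.inr (Sum.inr j))))
    (hTop12 : D.θ (φ (Sum.inl ⟨p - 1, by omega⟩), 1) = (φ (Sum.inr (Sum.inl ⟨q - 1, by omega⟩)), 2))
    (hTop23 : D.θ (φ (Sum.inr (Sum.inl ⟨q - 1, by omega⟩)), 1)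
      = (φ (Sum.inr (Sum.inr ⟨r - 1, by omega⟩)), 2))
    (hTop13 : D.θ (φ (Sum.inl ⟨p - 1, by omega⟩), 2) = (φ (Sum.inr (Sum.inr ⟨r - 1, by omega⟩)), 1))
    (hBot12 : D.θ (φ (Sum.inl ⟨0, hp⟩), 0) = (φ (Sum.inr (Sum.inl ⟨0, hq⟩)), 3))
    (hBot23 : D.θ (φ (Sum.inr (Sum.inl ⟨0, hq⟩)), 0) = (φ (Sum.inr (Sum.inr ⟨0, hr⟩)), 3))
    (hBot13 : D.θ (φ (Sum.inl ⟨0, hp⟩), 3) = (φ (Sum.inr (Sum.inr ⟨0, hr⟩)), 0)) :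
    nCircles D (fun _ => false) = 3 := by
  refine le_antisymm ?_ ?_
  · have h := ncirc_le_three (φ := φ) (hp := hp) (hq := hq) (hr := hr)
      (fun _ => false) hT1 hT2 hT3 hBot12 hBot23 hBot13
    simpa [nBst] using h
  · have hconst : ∀ a b, circGen D (fun _ => false) a b → col φ a = col φ b := by
      intro a b hab
      rcases hab with hab | hab
      · subst hab
        obtain ⟨x, i⟩ := a
        have h2 := col_theta hT1 hT2 hT3 hTop12 hTop23 hTop13 hBot12 hBot23 hBot13 (φ.symm x) i
        rw [φ.apply_symm_apply] at h2
        exact h2.symm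
      · subst hab; exact (col_smooth _).symm
    have hsurj : Function.Surjective (Quot.lift (col φ) hconst) := by
      intro y
      fin_cases y
      · exact ⟨Quot.mk _ (φ (Sum.inl ⟨0, hp⟩), 3),
          by simp [col, finval0, finval1, finval2, finval3]⟩
      · exact ⟨Quot.mk _ (φ (Sum.inl ⟨0, hp⟩), 0),
          by simp [col, finval0, finval1, finval2, finval3]⟩
      · exact ⟨Quot.mk _ (φ (Sum.inr (Sum.inl ⟨0, hq⟩)), 0),
          by simp [col, finval0, finval1, finval2, finval3]⟩
    have hle := Nat.card_le_card_of_surjective _ hsurj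
    have h3 : Nat.card (Fin 3) = 3 := by simp
    rw [h3] at hle
    exact hle

end PretzelAux6

namespace PretzelAux7
open PretzelAux PretzelAux2 PretzelAux3 PretzelAux5 PretzelAux6

/-- The distinguished enhanced state: all-`A` labels, all circles negative. -/
def S0pret (D : Diagram) : EState D := ⟨fun _ => false, fun _ => false, fun _ _ _ => rfl⟩

lemma estate_ext {D : Diagram} {S T : EState D} (h1 : S.st = T.st) (h2 : S.sgn = T.sgn) :
    S = T := by
  cases S with | mk a b c =>
  cases T with | mk a' b' c' =>
  change a = a' at h1
  change b = b' at h2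
  subst h1; subst h2; rfl

variable {D : Diagram} {p q r : ℕ} {hp : 0 < p} {hq : 0 < q} {hr : 0 < r}
variable {φ : (Fin p ⊕ (Fin q ⊕ Fin r)) ≃ D.X}

lemma writhe_eq (φ : (Fin p ⊕ (Fin q ⊕ Fin r)) ≃ D.X) :
    D.writhe = (p : ℤ) + q + r - 2 * D.nNeg := by
  have h1 := Fintype.card_congr φ
  simp only [Fintype.card_sum, Fintype.card_fin] at h1
  have h2 : D.nPos + D.nNeg = Fintype.card D.X := by
    rw [Diagram.nPos, Diagram.nNeg, ← Finset.card_univ]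
    have := Finset.card_filter_add_card_filter_not
      (s := (Finset.univ : Finset D.X)) (p := fun x => D.posCr x = true)
    simpa [Bool.not_eq_true] using this
  rw [Diagram.writhe]
  omega

lemma S0_nB : (S0pret D).nB = 0 := by simp [EState.nB, S0pret]

lemma S0_iDeg : (S0pret D).iDeg = -(D.nNeg : ℤ) := by
  rw [EState.iDeg, S0_nB]; ring

lemma S0_tau (h3 : nCircles D (fun _ => false) = 3) : (S0pret D).tau = -3 := by
  have hP : Nat.card {c : Circles D (S0pret D).st // (S0pret D).sgnQ c = true} = 0 := by
    have : IsEmpty {c : Circles D (S0pret D).st // (S0pret D).sgnQ c = true} := by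
      constructor; rintro ⟨c, hc⟩
      induction c using Quot.ind with
      | _ d => simp [EState.sgnQ, S0pret] at hc
    exact Nat.card_of_isEmpty
  have he : ∀ c : Circles D (S0pret D).st, (S0pret D).sgnQ c = false := by
    intro c
    induction c using Quot.ind with
    | _ d => rfl
  have hM : Nat.card {c : Circles D (S0pret D).st // (S0pret D).sgnQ c = false} = 3 := by
    rw [Nat.card_congr (Equiv.subtypeUnivEquiv he)]
    exact h3
  rw [EState.tau, hP, hM]
  rfl

lemma S0_jDeg (φ : (Fin p ⊕ (Fin q ⊕ Fin r)) ≃ D.X) (h3 : nCircles D (fun _ => false) = 3) :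
    (S0pret D).jDeg = (p : ℤ) + q + r - 3 * D.nNeg - 3 := by
  rw [EState.jDeg, S0_iDeg, S0_tau h3, writhe_eq φ]; ring

lemma key_bound
    (hT1 : TwistRegion D p true (fun j => φ (Sum.inl j)))
    (hT2 : TwistRegion D q true (fun j => φ (Sum.inr (Sum.inl j))))
    (hT3 : TwistRegion D r true (fun j => φ (Sum.inr (Sum.inr j))))
    (hTop12 : D.θ (φ (Sum.inl ⟨p - 1, by omega⟩), 1) = (φ (Sum.inr (Sum.inl ⟨q - 1, by omega⟩)), 2))
    (hTop23 : D.θ (φ (Sum.inr (Sum.inl ⟨q - 1, by omega⟩)), 1)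
      = (φ (Sum.inr (Sum.inr ⟨r - 1, by omega⟩)), 2))
    (hTop13 : D.θ (φ (Sum.inl ⟨p - 1, by omega⟩), 2) = (φ (Sum.inr (Sum.inr ⟨r - 1, by omega⟩)), 1))
    (hBot12 : D.θ (φ (Sum.inl ⟨0, hp⟩), 0) = (φ (Sum.inr (Sum.inl ⟨0, hq⟩)), 3))
    (hBot23 : D.θ (φ (Sum.inr (Sum.inl ⟨0, hq⟩)), 0) = (φ (Sum.inr (Sum.inr ⟨0, hr⟩)), 3))
    (hBot13 : D.θ (φ (Sum.inl ⟨0, hp⟩), 3) = (φ (Sum.inr (Sum.inr ⟨0, hr⟩)), 0)) :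
    ∀ S : EState D,
      ((p : ℤ) + q + r - 3 * D.nNeg - 3 ≤ S.jDeg) ∧
      (S.jDeg = (p : ℤ) + q + r - 3 * D.nNeg - 3 → S = S0pret D) := by
  intro S
  have hw := writhe_eq (D := D) φ
  have hjd : S.jDeg = D.writhe + ((S.nB : ℤ) - D.nNeg) + S.tau := rfl
  have htau : S.tau = (Nat.card {c : Circles D S.st // S.sgnQ c = true} : ℤ)
      - Nat.card {c : Circles D S.st // S.sgnQ c = false} := rfl
  have hsplit := tau_card_split S
  by_cases hB : ∃ x, S.st x = true
  · have h2 := ncirc_le_two (φ := φ) (hp := hp) (hq := hq) (hr := hr)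
      S.st hB hT1 hT2 hT3 hBot12 hBot23 hBot13
    have hnb : S.nB = nBst D S.st := rfl
    constructor
    · omega
    · intro hEq; exfalso; omega
  · push_neg at hB
    have hst : S.st = fun _ => false := funext fun x => by simpa using hB x
    have hnb : S.nB = 0 := by simp [EState.nB, hst]
    have hc3 : nCircles D S.st = 3 := by
      rw [hst]
      exact ncirc0 hT1 hT2 hT3 hTop12 hTop23 hTop13 hBot12 hBot23 hBot13
    constructor
    · omega
    · intro hEq
      have hP0 : Nat.card {c : Circles D S.st // S.sgnQ c = true} = 0 := by omega
      have hEmpty : IsEmpty {c : Circles D S.st // S.sgnQ c = true} := by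
        rcases Nat.card_eq_zero.mp hP0 with h | h
        · exact h
        · exact absurd h (not_infinite_iff_finite.mpr inferInstance)
      have hsgn : ∀ d, S.sgn d = false := by
        intro d
        by_contra hne
        have hTrue : S.sgnQ (Quot.mk _ d) = true := by show S.sgn d = true; simpa using hne
        exact hEmpty.false ⟨_, hTrue⟩
      exact estate_ext hst (funext hsgn)

end PretzelAux7

/-- For all positive integers `p`, `q`, `r`, the real-extreme Khovanov
homology of the pretzel link `P(p,q,r)` sits in quantum grading `j̲ = p+q+r-3n-3` and is
`ℤ` in homological grading `i = -n` and trivial in all other homological gradings, where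
`n` is the number of negative crossings of the (oriented) standard diagram. -/
theorem realExtremeKH_pretzel_ppp (p q r : ℕ) (hp : 0 < p) (hq : 0 < q) (hr : 0 < r)
    (D : Diagram) (hD : IsStdPretzel true true true p q r hp hq hr D) :
    IsRealExtremeGrading D ((p : ℤ) + q + r - 3 * D.nNeg - 3) ∧
    Nonempty (KH D (-(D.nNeg : ℤ)) ((p : ℤ) + q + r - 3 * D.nNeg - 3) ≃+ ℤ) ∧
    (∀ i : ℤ, i ≠ -(D.nNeg : ℤ) →
      Subsingleton (KH D i ((p : ℤ) + q + r - 3 * D.nNeg - 3))) := by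
  classical
  obtain ⟨φ, hT1, hT2, hT3, hTop12, hTop23, hTop13, hBot12, hBot23, hBot13⟩ := hD
  simp only [PretzelAux.tlSlot_true, PretzelAux.trSlot_true, PretzelAux.blSlot_true,
    PretzelAux.brSlot_true] at hTop12 hTop23 hTop13 hBot12 hBot23 hBot13
  have hc3 : nCircles D (fun _ => false) = 3 :=
    PretzelAux6.ncirc0 hT1 hT2 hT3 hTop12 hTop23 hTop13 hBot12 hBot23 hBot13
  have key := PretzelAux7.key_bound hT1 hT2 hT3 hTop12 hTop23 hTop13 hBot12 hBot23 hBot13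
  have hS0j : (PretzelAux7.S0pret D).jDeg = (p : ℤ) + q + r - 3 * D.nNeg - 3 :=
    PretzelAux7.S0_jDeg φ hc3
  have hS0i := PretzelAux7.S0_iDeg (D := D)
  have hset : {S : EState D | S.iDeg = -(D.nNeg : ℤ) ∧
      S.jDeg = (p : ℤ) + q + r - 3 * D.nNeg - 3} = {PretzelAux7.S0pret D} := by
    ext S
    simp only [Set.mem_setOf_eq, Set.mem_singleton_iff]
    constructor
    · rintro ⟨-, hj⟩; exact (key S).2 hj
    · rintro rfl; exact ⟨hS0i, hS0j⟩
  have hset' : {S : EState D | S.iDeg = -(D.nNeg : ℤ) - 1 ∧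
      S.jDeg = (p : ℤ) + q + r - 3 * D.nNeg - 3} = ∅ := by
    ext S
    simp only [Set.mem_setOf_eq, Set.mem_empty_iff_false, iff_false, not_and]
    intro hi hj
    rw [(key S).2 hj, hS0i] at hi
    omega
  have hdiff : ∀ T, incNum (PretzelAux7.S0pret D) T = 0 := by
    intro T
    rw [incNum, if_neg]
    rintro ⟨x, hx1, hx2, -, hx4, -⟩
    rw [(key T).2 (hx4.trans hS0j)] at hx2
    simp [PretzelAux7.S0pret] at hx2
  have hKHequiv := PretzelAux4.KH_equiv_int D (-(D.nNeg : ℤ))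
    ((p : ℤ) + q + r - 3 * D.nNeg - 3) (PretzelAux7.S0pret D) hset hset' hdiff
  refine ⟨⟨⟨-(D.nNeg : ℤ), ?_⟩, ?_⟩, hKHequiv, ?_⟩
  · obtain ⟨e⟩ := hKHequiv
    exact PretzelAux4.nontrivial_of_equiv_int e
  · intro j' hj' i
    have hempty : {S : EState D | S.iDeg = i ∧ S.jDeg = j'} = ∅ := by
      ext S
      simp only [Set.mem_setOf_eq, Set.mem_empty_iff_false, iff_false, not_and]
      intro _ hj
      have := (key S).1
      omega
    have := PretzelAux4.KH_subsingleton_of_empty D i j' hempty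
    exact not_nontrivial_iff_subsingleton.mpr this
  · intro i hi
    apply PretzelAux4.KH_subsingleton_of_empty
    rw [Set.eq_empty_iff_forall_notMem]
    rintro S ⟨hiS, hj⟩
    apply hi
    rw [← hiS, (key S).2 hj, hS0i]

end
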